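/- Remark 1 inequality (φ is dominated by ψ): For every positive integer ℓ and every a ∈ (0,1), setting b := 1/ℓ, it holds that φ(a,ℓ) ≤ ψ(a,b). Consequently, sup over integers ℓ > 10⁴ and a ∈ (0,1) of φ(a,ℓ) is at most sup over b ∈ (0,10⁻⁴) and a ∈ (0,1) of ψ(a,b). -/

import Mathlib

/-- The function `φ(a,ℓ)` from Theorem 2 of the paper. -/
noncomputable def phi (a : ℝ) (ℓ : ℕ) : ℝ :=
  ((a * ((ℓ : ℝ) + 1) / ((1 - a) * (ℓ : ℝ))) *
      (1 - (((ℓ : ℝ) + a) / ((ℓ : ℝ) + 1)) ^ ((ℓ : ℝ) / a))) /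
    (1 - (1 - a) * ∑ j ∈ Finset.range ℓ, 1 / ((ℓ : ℝ) - a * (j : ℝ)))

/-- The function `ψ(a,b)` from Remark 1 of the paper. -/
noncomputable def psi (a b : ℝ) : ℝ :=
  ((a * (1 + b) / (1 - a)) * (1 - ((1 + a * b) / (1 + b)) ^ (1 / (a * b)))) /
    (1 - (1 - a) * b / (1 - a + a * b) + ((1 - a) / a) * Real.log (1 - a + a * b))

/-- `log c ≥ 1 - 1/c` for `c > 0`. -/
lemma one_sub_inv_le_log {c : ℝ} (hc : 0 < c) : 1 - 1 / c ≤ Real.log c := by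
  have h := Real.log_le_sub_one_of_pos (show (0:ℝ) < 1 / c by positivity)
  rw [Real.log_div one_ne_zero (ne_of_gt hc), Real.log_one] at h
  linarith

/-- Telescoping bound: `∑_{j=0}^{n} 1/(x - a j) ≤ 1/(x - a n) + (1/a)(log x - log(x - a n))`. -/
lemma sum_inv_le (a x : ℝ) (ha : 0 < a) :
    ∀ n : ℕ, 0 < x - a * n →
      ∑ j ∈ Finset.range (n + 1), 1 / (x - a * (j : ℝ)) ≤
        1 / (x - a * n) + (1 / a) * (Real.log x - Real.log (x - a * n)) := by
  intro n
  induction n with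
  | zero =>
      intro hx
      simp only [Nat.cast_zero, mul_zero, sub_zero] at hx ⊢
      simp
  | succ n ih =>
      intro h
      have hcast : ((n + 1 : ℕ) : ℝ) = (n : ℝ) + 1 := by push_cast; ring
      rw [hcast] at h ⊢
      have hv : 0 < x - a * ((n : ℝ) + 1) := h
      have hu : 0 < x - a * (n : ℝ) := by nlinarith
      have ihh := ih hu
      rw [Finset.sum_range_succ, hcast]
      set u := x - a * (n : ℝ) with hudef
      set v := x - a * ((n : ℝ) + 1) with hvdef
      have huv : v = u - a := by rw [hudef, hvdef]; ring
      -- key : 1/u ≤ (1/a) * (log u - log v)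
      have hlog : Real.log (v / u) ≤ v / u - 1 := Real.log_le_sub_one_of_pos (by positivity)
      rw [Real.log_div (ne_of_gt hv) (ne_of_gt hu)] at hlog
      have hvu : v / u - 1 = -(a / u) := by
        rw [huv]; field_simp; ring
      rw [hvu] at hlog
      have key : 1 / u ≤ (1 / a) * (Real.log u - Real.log v) := by
        have h1 : a / u ≤ Real.log u - Real.log v := by linarith
        have h2 : (1 / a) * (a / u) = 1 / u := by field_simp
        calc 1 / u = (1 / a) * (a / u) := h2.symm
          _ ≤ (1 / a) * (Real.log u - Real.log v) :=
              mul_le_mul_of_nonneg_left h1 (by positivity)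
      have hring : (1 / a) * (Real.log x - Real.log u) + (1 / a) * (Real.log u - Real.log v)
          = (1 / a) * (Real.log x - Real.log v) := by ring
      linarith [ihh, key]

theorem phi_le_psi :
    (∀ ℓ : ℕ, 0 < ℓ → ∀ a ∈ Set.Ioo (0 : ℝ) 1, phi a ℓ ≤ psi a (1 / (ℓ : ℝ)))
    ∧ (∀ C : ℝ,
        (∀ a ∈ Set.Ioo (0 : ℝ) 1, ∀ b ∈ Set.Ioo (0 : ℝ) (10 ^ (-4 : ℤ) : ℝ), psi a b ≤ C) →
        ∀ ℓ : ℕ, 10 ^ 4 < ℓ → ∀ a ∈ Set.Ioo (0 : ℝ) 1, phi a ℓ ≤ C) := by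
  have main : ∀ ℓ : ℕ, 0 < ℓ → ∀ a ∈ Set.Ioo (0 : ℝ) 1, phi a ℓ ≤ psi a (1 / (ℓ : ℝ)) := by
    intro ℓ hℓ a ha
    obtain ⟨ha0, ha1⟩ := ha
    unfold phi psi
    set L : ℝ := (ℓ : ℝ) with hLdef
    have hL : 1 ≤ L := by rw [hLdef]; exact_mod_cast hℓ
    have hL0 : 0 < L := by linarith
    have h1a : 0 < 1 - a := by linarith
    -- rewrite the ψ-numerator into the φ-numerator
    have hbase : (1 + a * (1 / L)) / (1 + 1 / L) = (L + a) / (L + 1) := by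
      rw [div_eq_div_iff (by positivity) (by positivity)]
      field_simp
    have hexp : 1 / (a * (1 / L)) = L / a := by
      field_simp
    have hcoef : a * (1 + 1 / L) / (1 - a) = a * (L + 1) / ((1 - a) * L) := by
      rw [div_eq_div_iff (by positivity) (by positivity)]
      field_simp
    rw [hbase, hexp, hcoef]
    -- now both sides are N / Dφ and N / Dψ
    set N : ℝ := a * (L + 1) / ((1 - a) * L) * (1 - ((L + a) / (L + 1)) ^ (L / a)) with hNdef
    set Dφ : ℝ := 1 - (1 - a) * ∑ j ∈ Finset.range ℓ, 1 / (L - a * (j : ℝ)) with hDφdef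
    set Dψ : ℝ := 1 - (1 - a) * (1 / L) / (1 - a + a * (1 / L)) +
        (1 - a) / a * Real.log (1 - a + a * (1 / L)) with hDψdef
    -- N ≥ 0
    have hNpos : 0 ≤ N := by
      have hr0 : (0:ℝ) ≤ (L + a) / (L + 1) := by positivity
      have hr1 : (L + a) / (L + 1) < 1 := by
        rw [div_lt_one (by positivity)]; linarith
      have hrp : ((L + a) / (L + 1)) ^ (L / a) < 1 :=
        Real.rpow_lt_one hr0 hr1 (by positivity)
      have : (0:ℝ) ≤ a * (L + 1) / ((1 - a) * L) := by positivity
      rw [hNdef]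
      exact mul_nonneg this (by linarith)
    -- basic facts about c := 1 - a + a/L and u := L - a(L-1)
    have hc0 : 0 < 1 - a + a * (1 / L) := by positivity
    have hc1a : 1 - a < 1 - a + a * (1 / L) := by
      have : 0 < a * (1 / L) := by positivity
      linarith
    have hu0 : 0 < L - a * (L - 1) := by nlinarith
    have hcu : 1 - a + a * (1 / L) = (L - a * (L - 1)) / L := by
      field_simp; ring
    -- Dψ > 0
    have hDψpos : 0 < Dψ := by
      have hlog := one_sub_inv_le_log hc0
      have step1 : (1 - a) / a * (1 - 1 / (1 - a + a * (1 / L))) ≤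
          (1 - a) / a * Real.log (1 - a + a * (1 / L)) :=
        mul_le_mul_of_nonneg_left hlog (by positivity)
      have step2 : 1 - (1 - a) * (1 / L) / (1 - a + a * (1 / L)) +
          (1 - a) / a * (1 - 1 / (1 - a + a * (1 / L))) =
          1 - (1 - a) / (1 - a + a * (1 / L)) := by
        field_simp
        ring
      have step3 : (1 - a) / (1 - a + a * (1 / L)) < 1 := by
        rw [div_lt_one hc0]; exact hc1a
      rw [hDψdef]
      linarith
    -- Dψ ≤ Dφ
    have hDle : Dψ ≤ Dφ := by
      -- apply the telescoping sum bound with n = ℓ - 1, x = L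
      have hm : ℓ - 1 + 1 = ℓ := Nat.succ_pred_eq_of_pos hℓ
      have hmcast : ((ℓ - 1 : ℕ) : ℝ) = L - 1 := by
        rw [hLdef]
        push_cast [hℓ]
        ring
      have hsum := sum_inv_le a L ha0 (ℓ - 1) (by rw [hmcast]; exact hu0)
      rw [hm, hmcast] at hsum
      -- multiply by (1 - a) ≥ 0
      have hsum' : (1 - a) * ∑ j ∈ Finset.range ℓ, 1 / (L - a * (j : ℝ)) ≤
          (1 - a) * (1 / (L - a * (L - 1)) +
            (1 / a) * (Real.log L - Real.log (L - a * (L - 1)))) :=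
        mul_le_mul_of_nonneg_left hsum (by linarith)
      -- identify the RHS with the ψ-denominator pieces
      have hlogc : Real.log (1 - a + a * (1 / L)) =
          Real.log (L - a * (L - 1)) - Real.log L := by
        rw [hcu, Real.log_div (ne_of_gt hu0) (ne_of_gt hL0)]
      have hfrac : (1 - a) * (1 / L) / (1 - a + a * (1 / L)) =
          (1 - a) / (L - a * (L - 1)) := by
        rw [hcu]
        field_simp
      have hexpand : (1 - a) * (1 / (L - a * (L - 1)) +
            (1 / a) * (Real.log L - Real.log (L - a * (L - 1)))) =
          (1 - a) / (L - a * (L - 1)) -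
            (1 - a) / a * (Real.log (L - a * (L - 1)) - Real.log L) := by
        field_simp
        ring
      rw [hDψdef, hDφdef, hlogc, hfrac]
      linarith [hsum', hexpand.symm ▸ hsum']
    exact div_le_div_of_nonneg_left hNpos hDψpos hDle
  refine ⟨main, ?_⟩
  intro C hC ℓ hℓ a ha
  have hℓ0 : 0 < ℓ := lt_trans (by norm_num) hℓ
  have hL : (10 ^ 4 : ℝ) < (ℓ : ℝ) := by exact_mod_cast hℓ
  have hb : (1 / (ℓ : ℝ)) ∈ Set.Ioo (0 : ℝ) (10 ^ (-4 : ℤ) : ℝ) := by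
    constructor
    · positivity
    · rw [show ((10:ℝ) ^ (-4 : ℤ)) = 1 / 10 ^ 4 by norm_num]
      apply one_div_lt_one_div_of_lt (by norm_num) hL
  exact le_trans (main ℓ hℓ0 a ha) (hC a ha _ hb)
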